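/- Let U : ℝⁿ → ℝ be differentiable with K-smooth gradient, i.e. ‖∇U(x) − ∇U(y)‖ ≤ K‖x − y‖ for all x, y with K > 0, let B ∈ ℝ^{n×n} be nonzero with Frobenius norm ‖B‖_F, and suppose the B-dissipativity condition ⟨B∇U(x), x⟩ ≥ α₁‖x‖² − α₂ holds for all x, with α₁ > 0 and α₂ ≥ 0. Then for every step size γ with 0 < γ ≤ α₁/(2‖B‖_F² K²) and every x ∈ ℝⁿ, the drift step satisfies ‖x − γ B∇U(x)‖² ≤ (1 − γα₁)‖x‖² + 2γα₂ + 2γ²‖B‖_F²‖∇U(0)‖². -/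

import Mathlib

/-- One-step contraction bound for the preconditioned gradient (drift) step: under
`K`-smoothness of `∇U` and `B`-dissipativity `⟨B∇U(x), x⟩ ≥ α₁‖x‖² − α₂`, for any step
size `0 < γ ≤ α₁/(2‖B‖_F² K²)`,
`‖x − γ B∇U(x)‖² ≤ (1 − γα₁)‖x‖² + 2γα₂ + 2γ²‖B‖_F²‖∇U(0)‖²`. -/
lemma frob_bound {n : ℕ} (B : Matrix (Fin n) (Fin n) ℝ)
    (v : EuclideanSpace ℝ (Fin n)) :
    ‖Matrix.toEuclideanLin B v‖ ^ 2 ≤ (∑ i, ∑ j, (B i j) ^ 2) * ‖v‖ ^ 2 := by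
  have hw : ∀ i, (Matrix.toEuclideanLin B v) i = ∑ j, B i j * v j := by
    intro i
    simp [Matrix.toEuclideanLin, Matrix.mulVec, dotProduct]
  have hnorm : ∀ (u : EuclideanSpace ℝ (Fin n)), ‖u‖ ^ 2 = ∑ i, (u i) ^ 2 := by
    intro u
    rw [EuclideanSpace.norm_eq, Real.sq_sqrt (by positivity)]
    simp [sq_abs]
  rw [hnorm, hnorm, Finset.sum_mul]
  refine Finset.sum_le_sum fun i _ => ?_
  rw [hw]
  exact Finset.sum_mul_sq_le_sq_mul_sq _ _ _

theorem preconditioned_drift_step_bound (n : ℕ)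
    (U : EuclideanSpace ℝ (Fin n) → ℝ)
    (gradU : EuclideanSpace ℝ (Fin n) → EuclideanSpace ℝ (Fin n))
    (hgrad : ∀ x, HasGradientAt U (gradU x) x)
    (K : ℝ) (hK : 0 < K)
    (hsmooth : ∀ x y, ‖gradU x - gradU y‖ ≤ K * ‖x - y‖)
    (B : Matrix (Fin n) (Fin n) ℝ) (hB : B ≠ 0)
    (α₁ α₂ : ℝ) (hα₁ : 0 < α₁) (hα₂ : 0 ≤ α₂)
    (hdiss : ∀ x : EuclideanSpace ℝ (Fin n),
      α₁ * ‖x‖ ^ 2 - α₂ ≤ (inner ℝ (Matrix.toEuclideanLin B (gradU x)) x : ℝ))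
    (γ : ℝ) (hγ0 : 0 < γ)
    (hγ : γ ≤ α₁ / (2 * (∑ i, ∑ j, (B i j) ^ 2) * K ^ 2))
    (x : EuclideanSpace ℝ (Fin n)) :
    ‖x - γ • Matrix.toEuclideanLin B (gradU x)‖ ^ 2
      ≤ (1 - γ * α₁) * ‖x‖ ^ 2 + 2 * γ * α₂
        + 2 * γ ^ 2 * (∑ i, ∑ j, (B i j) ^ 2) * ‖gradU 0‖ ^ 2 := by
  set F := ∑ i, ∑ j, (B i j) ^ 2 with hFdef
  set w := Matrix.toEuclideanLin B (gradU x) with hwdef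
  have hF0 : 0 < F := by
    obtain ⟨i, hi⟩ := Function.ne_iff.mp hB
    obtain ⟨j, hj⟩ := Function.ne_iff.mp hi
    have h1 : (B i j) ^ 2 ≤ ∑ j', (B i j') ^ 2 :=
      Finset.single_le_sum (f := fun j' => (B i j') ^ 2) (fun k _ => sq_nonneg _)
        (Finset.mem_univ j)
    have h2 : ∑ j', (B i j') ^ 2 ≤ F :=
      Finset.single_le_sum (f := fun i' => ∑ j', (B i' j') ^ 2)
        (fun k _ => Finset.sum_nonneg fun _ _ => sq_nonneg _) (Finset.mem_univ i)
    have : 0 < (B i j) ^ 2 := pow_pos (abs_pos.mpr hj) 2 |>.trans_le (le_of_eq (sq_abs _))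
    linarith
  have hexp : ‖x - γ • w‖ ^ 2
      = ‖x‖ ^ 2 - 2 * (γ * (inner ℝ w x : ℝ)) + γ ^ 2 * ‖w‖ ^ 2 := by
    rw [norm_sub_sq_real, real_inner_smul_right, real_inner_comm, norm_smul]
    rw [Real.norm_eq_abs, mul_pow, sq_abs]
  have h1 := hdiss x
  have h2 := frob_bound B (gradU x)
  have h3 : ‖gradU x‖ ≤ K * ‖x‖ + ‖gradU 0‖ := by
    have := hsmooth x 0
    rw [sub_zero] at this
    calc ‖gradU x‖ = ‖(gradU x - gradU 0) + gradU 0‖ := by rw [sub_add_cancel]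
      _ ≤ ‖gradU x - gradU 0‖ + ‖gradU 0‖ := norm_add_le _ _
      _ ≤ K * ‖x‖ + ‖gradU 0‖ := by linarith
  have h4 : ‖gradU x‖ ^ 2 ≤ 2 * K ^ 2 * ‖x‖ ^ 2 + 2 * ‖gradU 0‖ ^ 2 := by
    nlinarith [norm_nonneg (gradU x), norm_nonneg x, norm_nonneg (gradU 0),
      sq_nonneg (K * ‖x‖ - ‖gradU 0‖)]
  have hstep : γ * (2 * F * K ^ 2) ≤ α₁ := by
    have hpos : 0 < 2 * F * K ^ 2 := by positivity
    exact (le_div_iff₀ hpos).mp hγ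
  rw [hexp]
  nlinarith [sq_nonneg γ, mul_le_mul_of_nonneg_left h4 (le_of_lt hF0),
    mul_le_mul_of_nonneg_left h2 (sq_nonneg γ),
    mul_le_mul_of_nonneg_right hstep (sq_nonneg ‖x‖),
    mul_le_mul_of_nonneg_left h1 (le_of_lt hγ0), sq_nonneg ‖x‖]
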